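/- For nonnegative integers n and k, the q-binomial coefficient [n choose k]_q evaluated at q = -1 equals 0 if n is even and k is odd, and equals binomial(floor(n/2), floor(k/2)) otherwise. -/
import Mathlib


/-- The Gaussian binomial coefficient as a polynomial in `q`, defined by the
`q`-Pascal recurrence `[n+1, k+1] = [n, k] + q^(k+1) [n, k+1]`. -/
noncomputable def qbinom : ℕ → ℕ → Polynomial ℤ
  | _, 0 => 1
  | 0, _ + 1 => 0
  | n + 1, k + 1 => qbinom n k + Polynomial.X ^ (k + 1) * qbinom n (k + 1)

theorem stmt2 (n k : ℕ) :
    (qbinom n k).eval (-1) =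
      if Even n ∧ Odd k then 0 else (Nat.choose (n / 2) (k / 2) : ℤ) := by
  induction n generalizing k with
  | zero =>
    cases k with
    | zero => simp [qbinom]
    | succ k =>
      simp only [qbinom, Polynomial.eval_zero, Nat.even_iff, Nat.odd_iff]
      split_ifs with h
      · rfl
      · have hk : (k + 1) % 2 = 0 := by
          rcases Nat.mod_two_eq_zero_or_one (k + 1) with h' | h'
          · exact h'
          · exact absurd ⟨by trivial, h'⟩ h
        rw [Nat.zero_div, Nat.choose_eq_zero_of_lt (by omega)]
        simp
  | succ n ih =>
    cases k with
    | zero => simp [qbinom, ih]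
    | succ k =>
      simp only [qbinom, Polynomial.eval_add, Polynomial.eval_mul, Polynomial.eval_pow,
        Polynomial.eval_X, ih]
      have hpow : ((-1 : ℤ)) ^ (k + 1) = if (k + 1) % 2 = 0 then 1 else -1 := by
        split_ifs with h
        · exact Even.neg_one_pow (Nat.even_iff.mpr h)
        · exact Odd.neg_one_pow (Nat.odd_iff.mpr (by omega))
      rw [hpow]
      simp only [Nat.even_iff, Nat.odd_iff]
      rcases Nat.mod_two_eq_zero_or_one n with hn | hn <;>
        rcases Nat.mod_two_eq_zero_or_one k with hk | hk
      · -- n even, k even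
        rw [if_neg (by omega), if_neg (by omega), if_pos (by omega),
          if_neg (by omega)]
        have e1 : (n + 1) / 2 = n / 2 := by omega
        have e2 : (k + 1) / 2 = k / 2 := by omega
        rw [e1, e2]; ring
      · -- n even, k odd
        rw [if_pos (by omega), if_pos (by omega), if_neg (by omega),
          if_neg (by omega)]
        have e1 : (n + 1) / 2 = n / 2 := by omega
        rw [e1]; ring
      · -- n odd, k even
        rw [if_neg (by omega), if_neg (by omega), if_neg (by omega),
          if_pos (by omega)]
        have e2 : (k + 1) / 2 = k / 2 := by omega
        rw [e2]; ring
      · -- n odd, k odd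
        rw [if_neg (by omega), if_pos (by omega), if_neg (by omega),
          if_neg (by omega)]
        have e1 : (n + 1) / 2 = n / 2 + 1 := by omega
        have e2 : (k + 1) / 2 = k / 2 + 1 := by omega
        rw [e1, e2, Nat.choose_succ_succ]
        push_cast; ring
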